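/- arXiv:1106.2245 — 2 statements merged into one kernel-verified Lean document; each statement's English description precedes it below -/
import Mathlib

section
/- Suppose that ∫_{[1,∞)} z·log(z) Λ(dz) < ∞. Then the offspring distribution has a finite (k log k)-moment: Σ_{k≥1} p_k · k · log k < ∞. -/
open MeasureTheory

private lemma sum_j_le (l : ℝ) (hl : 0 ≤ l) (n : ℕ) :
    ∑ j ∈ Finset.range n, l ^ j / (j.factorial : ℝ) * (j : ℝ) ≤ l * Real.exp l := by
  cases n with
  | zero => simp; positivity
  | succ m =>
    rw [Finset.sum_range_succ']
    have h1 : ∀ i : ℕ, l ^ (i + 1) / ((i + 1).factorial : ℝ) * ((i + 1 : ℕ) : ℝ)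
        = l * (l ^ i / (i.factorial : ℝ)) := by
      intro i
      have hf : ((i + 1).factorial : ℝ) = ((i : ℝ) + 1) * (i.factorial : ℝ) := by
        rw [Nat.factorial_succ]; push_cast; ring
      have hfi : (i.factorial : ℝ) ≠ 0 := by positivity
      have hip : ((i : ℝ) + 1) ≠ 0 := by positivity
      rw [hf]
      push_cast
      field_simp
      ring
    simp only [h1]
    simp only [pow_zero, Nat.cast_zero, mul_zero, add_zero]
    rw [← Finset.mul_sum]
    exact mul_le_mul_of_nonneg_left (Real.sum_le_exp_of_nonneg hl m) hl

private lemma key_poisson (l : ℝ) (hl : 0 ≤ l) (N : ℕ) :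
    ∑ k ∈ Finset.range N, Real.exp (-l) * l ^ k / (k.factorial : ℝ) * ((k : ℝ) * Real.log k)
      ≤ l * (Real.log (1 + l) + 1) := by
  have hexp : 0 < Real.exp l := Real.exp_pos l
  have hlog0 : 0 ≤ Real.log (1 + l) := Real.log_nonneg (by linarith)
  have h1l : (0 : ℝ) < 1 + l := by linarith
  -- rewrite each term pulling out exp(-l)
  have hterm : ∀ k : ℕ, Real.exp (-l) * l ^ k / (k.factorial : ℝ) * ((k : ℝ) * Real.log k)
      = Real.exp (-l) * (l ^ k / (k.factorial : ℝ) * ((k : ℝ) * Real.log k)) := by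
    intro k; ring
  simp only [hterm]
  rw [← Finset.mul_sum]
  have hT : ∑ k ∈ Finset.range N, l ^ k / (k.factorial : ℝ) * ((k : ℝ) * Real.log k)
      ≤ l * (Real.log (1 + l) + 1) * Real.exp l := by
    cases N with
    | zero => simp; positivity
    | succ n =>
      rw [Finset.sum_range_succ']
      simp only [pow_zero, Nat.cast_zero, zero_mul, mul_zero, add_zero]
      have h1 : ∀ j : ℕ, l ^ (j + 1) / ((j + 1).factorial : ℝ)
            * (((j + 1 : ℕ) : ℝ) * Real.log ((j + 1 : ℕ) : ℝ))
          = l * (l ^ j / (j.factorial : ℝ)) * Real.log ((j : ℝ) + 1) := by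
        intro j
        have hf : ((j + 1).factorial : ℝ) = ((j : ℝ) + 1) * (j.factorial : ℝ) := by
          rw [Nat.factorial_succ]; push_cast; ring
        have hfi : (j.factorial : ℝ) ≠ 0 := by positivity
        have hjp : ((j : ℝ) + 1) ≠ 0 := by positivity
        rw [hf]
        push_cast
        field_simp
        ring
      simp only [h1]
      have hbd : ∀ j : ℕ, l * (l ^ j / (j.factorial : ℝ)) * Real.log ((j : ℝ) + 1)
          ≤ l * (l ^ j / (j.factorial : ℝ))
            * (Real.log (1 + l) + ((j : ℝ) + 1) / (1 + l)) := by
        intro j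
        have hjp : (0 : ℝ) < (j : ℝ) + 1 := by positivity
        have hlj : Real.log ((j : ℝ) + 1) ≤ Real.log (1 + l) + ((j : ℝ) + 1) / (1 + l) := by
          have hd := Real.log_le_sub_one_of_pos (div_pos hjp h1l)
          rw [Real.log_div (ne_of_gt hjp) (ne_of_gt h1l)] at hd
          linarith
        have hnn : 0 ≤ l * (l ^ j / (j.factorial : ℝ)) := by positivity
        exact mul_le_mul_of_nonneg_left hlj hnn
      calc ∑ j ∈ Finset.range n, l * (l ^ j / (j.factorial : ℝ)) * Real.log ((j : ℝ) + 1)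
          ≤ ∑ j ∈ Finset.range n, l * (l ^ j / (j.factorial : ℝ))
              * (Real.log (1 + l) + ((j : ℝ) + 1) / (1 + l)) :=
            Finset.sum_le_sum fun j _ => hbd j
        _ = (l * Real.log (1 + l)) * (∑ j ∈ Finset.range n, l ^ j / (j.factorial : ℝ))
            + (l / (1 + l)) * (∑ j ∈ Finset.range n, l ^ j / (j.factorial : ℝ) * (j : ℝ))
            + (l / (1 + l)) * (∑ j ∈ Finset.range n, l ^ j / (j.factorial : ℝ)) := by
            rw [Finset.mul_sum, Finset.mul_sum, Finset.mul_sum, ← Finset.sum_add_distrib,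
              ← Finset.sum_add_distrib]
            apply Finset.sum_congr rfl
            intro j _
            field_simp
            ring
        _ ≤ (l * Real.log (1 + l)) * Real.exp l + (l / (1 + l)) * (l * Real.exp l)
            + (l / (1 + l)) * Real.exp l := by
            have hA := Real.sum_le_exp_of_nonneg hl n
            have hB := sum_j_le l hl n
            have c1 : 0 ≤ l * Real.log (1 + l) := by positivity
            have c2 : 0 ≤ l / (1 + l) := by positivity
            gcongr
        _ = l * (Real.log (1 + l) + 1) * Real.exp l := by
            field_simp
            ring
  calc Real.exp (-l) * ∑ k ∈ Finset.range N, l ^ k / (k.factorial : ℝ) * ((k : ℝ) * Real.log k)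
      ≤ Real.exp (-l) * (l * (Real.log (1 + l) + 1) * Real.exp l) :=
        mul_le_mul_of_nonneg_left hT (le_of_lt (Real.exp_pos _))
    _ = l * (Real.log (1 + l) + 1) := by
        rw [Real.exp_neg]
        field_simp

/-- Λ is a nonzero measure on (0,∞) with finite total mass
`b ∈ (0,∞)` and finite first moment. The offspring distribution of the BGW
process embedded in a splitting tree with lifespan measure Λ is
`p k = (1/b) ∫ e^{-bz} (bz)^k / k! Λ(dz)`. If `∫_{[1,∞)} z log z Λ(dz) < ∞`,
then `Σ_k p k * k * log k < ∞`. -/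
theorem offspring_k_log_k_moment_finite
    (Λ : Measure ℝ) (hΛ : Λ ≠ 0) (hsupp : Λ (Set.Iic 0) = 0)
    (b : ℝ) (hb : 0 < b) (hmass : Λ Set.univ = ENNReal.ofReal b)
    (hm : IntegrableOn (fun z => z) (Set.Ioi 0) Λ)
    (p : ℕ → ℝ)
    (hp : ∀ k : ℕ, p k = (1 / b) *
      ∫ z in Set.Ioi 0, Real.exp (-(b * z)) * (b * z) ^ k / (k.factorial : ℝ) ∂Λ)
    (hlog : IntegrableOn (fun z => z * Real.log z) (Set.Ici 1) Λ) :
    Summable (fun k : ℕ => p k * (k : ℝ) * Real.log k) := by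
  have hfin : IsFiniteMeasure Λ := ⟨by rw [hmass]; exact ENNReal.ofReal_lt_top⟩
  set g : ℝ → ℝ := fun z => z * (Real.log (1 + b * z) + 1) with hg_def
  have hgmeas : Measurable g := by
    apply measurable_id.mul
    exact (Real.measurable_log.comp (measurable_const.add (measurable_const.mul
      measurable_id))).add measurable_const
  have hc : (0:ℝ) ≤ Real.log (1 + b) + 1 := by
    have : 0 ≤ Real.log (1 + b) := Real.log_nonneg (by linarith)
    linarith
  -- integrability of g on (0,1]
  have hg1 : IntegrableOn g (Set.Ioc 0 1) Λ := by
    apply Measure.integrableOn_of_bounded (M := Real.log (1 + b) + 1)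
      (measure_ne_top Λ _) hgmeas.aestronglyMeasurable
    rw [ae_restrict_iff' measurableSet_Ioc]
    filter_upwards with z hz
    obtain ⟨hz0, hz1⟩ := hz
    have h1 : (0:ℝ) < 1 + b * z := by nlinarith
    have h2 : Real.log (1 + b * z) ≤ Real.log (1 + b) := by
      apply Real.log_le_log h1; nlinarith
    have h3 : 0 ≤ Real.log (1 + b * z) := Real.log_nonneg (by nlinarith)
    show ‖z * (Real.log (1 + b * z) + 1)‖ ≤ Real.log (1 + b) + 1
    rw [Real.norm_eq_abs, abs_of_nonneg (by nlinarith)]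
    nlinarith
  -- integrability of g on (1,∞)
  have hg2 : IntegrableOn g (Set.Ioi 1) Λ := by
    have hdom : IntegrableOn
        (fun z => (Real.log (1 + b) + 1) * z + z * Real.log z) (Set.Ioi 1) Λ := by
      apply Integrable.add
      · exact (hm.mono_set (Set.Ioi_subset_Ioi (by norm_num))).const_mul _
      · exact hlog.mono_set (Set.Ioi_subset_Ici le_rfl)
    apply MeasureTheory.Integrable.mono hdom hgmeas.aestronglyMeasurable.restrict
    rw [ae_restrict_iff' measurableSet_Ioi]
    filter_upwards with z hz
    have hz1 : (1:ℝ) < z := hz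
    have hz0 : (0:ℝ) < z := by linarith
    have h1 : (0:ℝ) < 1 + b * z := by nlinarith
    have hlz : 0 ≤ Real.log z := Real.log_nonneg (by linarith)
    have h2 : Real.log (1 + b * z) ≤ Real.log (1 + b) + Real.log z := by
      have hle : 1 + b * z ≤ (1 + b) * z := by nlinarith
      calc Real.log (1 + b * z) ≤ Real.log ((1 + b) * z) := Real.log_le_log h1 hle
        _ = Real.log (1 + b) + Real.log z :=
          Real.log_mul (by positivity) (ne_of_gt hz0)
    have h3 : 0 ≤ Real.log (1 + b * z) := Real.log_nonneg (by nlinarith)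
    show ‖z * (Real.log (1 + b * z) + 1)‖ ≤ ‖(Real.log (1 + b) + 1) * z + z * Real.log z‖
    rw [Real.norm_eq_abs, Real.norm_eq_abs, abs_of_nonneg (by nlinarith),
      abs_of_nonneg (by nlinarith)]
    nlinarith
  have hgI : IntegrableOn g (Set.Ioi 0) Λ := by
    rw [← Set.Ioc_union_Ioi_eq_Ioi (zero_le_one (α := ℝ))]
    exact hg1.union hg2
  -- integrability of each Poisson-weight function
  have hint : ∀ k : ℕ, IntegrableOn
      (fun z => Real.exp (-(b * z)) * (b * z) ^ k / (k.factorial : ℝ)) (Set.Ioi 0) Λ := by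
    intro k
    have hmeas : Measurable fun z => Real.exp (-(b * z)) * (b * z) ^ k / (k.factorial : ℝ) := by
      apply Measurable.div _ measurable_const
      exact (Real.measurable_exp.comp (measurable_const.mul measurable_id).neg).mul
        ((measurable_const.mul measurable_id).pow_const k)
    apply Measure.integrableOn_of_bounded (M := 1) (measure_ne_top Λ _)
      hmeas.aestronglyMeasurable
    rw [ae_restrict_iff' measurableSet_Ioi]
    filter_upwards with z hz
    have hx : (0:ℝ) < b * z := mul_pos hb hz
    have hle : (b * z) ^ k / (k.factorial : ℝ) ≤ Real.exp (b * z) := by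
      refine le_trans ?_ (Real.sum_le_exp_of_nonneg hx.le (k + 1))
      refine Finset.single_le_sum (f := fun i => (b * z) ^ i / (i.factorial : ℝ))
        (fun i _ => by positivity) (Finset.self_mem_range_succ k)
    have hnn : 0 ≤ Real.exp (-(b * z)) * (b * z) ^ k / (k.factorial : ℝ) := by positivity
    rw [Real.norm_eq_abs, abs_of_nonneg hnn]
    calc Real.exp (-(b * z)) * (b * z) ^ k / (k.factorial : ℝ)
        = Real.exp (-(b * z)) * ((b * z) ^ k / (k.factorial : ℝ)) := by ring
      _ ≤ Real.exp (-(b * z)) * Real.exp (b * z) :=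
          mul_le_mul_of_nonneg_left hle (le_of_lt (Real.exp_pos _))
      _ = 1 := by rw [← Real.exp_add]; simp
  -- nonnegativity of p
  have hpnn : ∀ k, 0 ≤ p k := by
    intro k
    rw [hp k]
    apply mul_nonneg (by positivity)
    apply setIntegral_nonneg measurableSet_Ioi
    intro z hz
    have hx : (0:ℝ) < b * z := mul_pos hb hz
    positivity
  have hfnn : ∀ k : ℕ, 0 ≤ p k * (k : ℝ) * Real.log k := by
    intro k
    rcases Nat.eq_zero_or_pos k with hk | hk
    · simp [hk]
    · have : (1:ℝ) ≤ (k : ℝ) := by exact_mod_cast hk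
      exact mul_nonneg (mul_nonneg (hpnn k) (by positivity)) (Real.log_nonneg this)
  -- partial-sum bound
  set C := ∫ z in Set.Ioi 0, g z ∂Λ with hC_def
  apply summable_of_sum_range_le hfnn (c := C)
  intro n
  have step1 : ∀ k : ℕ, p k * (k : ℝ) * Real.log k = (1 / b) *
      ∫ z in Set.Ioi 0, (Real.exp (-(b * z)) * (b * z) ^ k / (k.factorial : ℝ)
        * ((k : ℝ) * Real.log k)) ∂Λ := by
    intro k
    rw [integral_mul_const, hp k]
    ring
  calc ∑ k ∈ Finset.range n, p k * (k : ℝ) * Real.log k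
      = (1 / b) * ∑ k ∈ Finset.range n,
          ∫ z in Set.Ioi 0, (Real.exp (-(b * z)) * (b * z) ^ k / (k.factorial : ℝ)
            * ((k : ℝ) * Real.log k)) ∂Λ := by
        rw [Finset.mul_sum]
        exact Finset.sum_congr rfl fun k _ => step1 k
    _ = (1 / b) * ∫ z in Set.Ioi 0, (∑ k ∈ Finset.range n,
          Real.exp (-(b * z)) * (b * z) ^ k / (k.factorial : ℝ)
            * ((k : ℝ) * Real.log k)) ∂Λ := by
        rw [integral_finset_sum _ (fun k _ => (hint k).mul_const _)]
    _ ≤ (1 / b) * ∫ z in Set.Ioi 0, b * g z ∂Λ := by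
        apply mul_le_mul_of_nonneg_left _ (by positivity)
        apply setIntegral_mono_on
          (integrable_finset_sum _ (fun k _ => (hint k).mul_const _))
          (hgI.const_mul b) measurableSet_Ioi
        intro z hz
        have hl : 0 ≤ b * z := (mul_pos hb hz).le
        have := key_poisson (b * z) hl n
        calc ∑ k ∈ Finset.range n, Real.exp (-(b * z)) * (b * z) ^ k / (k.factorial : ℝ)
              * ((k : ℝ) * Real.log k)
            ≤ (b * z) * (Real.log (1 + b * z) + 1) := this
          _ = b * g z := by rw [hg_def]; ring
    _ = C := by
        rw [integral_const_mul]
        field_simp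
        rfl
end

section
/- Assume that β > 0 or Λ ≠ 0, and that ∫_{[1,∞)} dλ/ψ(λ) < ∞. Let v : (0,∞) → (0,∞) be the inverse of the strictly decreasing bijection φ(t) = ∫_t^∞ dλ/ψ(λ) of (0,∞) onto itself. Then for every u ≥ 0, lim_{a→∞} v(a − u)/v(a) = e^{α u}. -/
open MeasureTheory Real Set Filter

lemma g_nonneg (x : ℝ) : 0 ≤ Real.exp (-x) - 1 + x := by
  have := Real.add_one_le_exp (-x); linarith

lemma g_le_lin {x : ℝ} (hx : 0 ≤ x) : Real.exp (-x) - 1 + x ≤ x := by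
  have : Real.exp (-x) ≤ 1 := Real.exp_le_one_iff.2 (by linarith)
  linarith

lemma g_le_sq {x : ℝ} (hx : 0 ≤ x) : Real.exp (-x) - 1 + x ≤ x ^ 2 := by
  rcases le_or_gt x 1 with h | h
  · have h1 : |(-x)| ≤ 1 := by rw [abs_neg, abs_of_nonneg hx]; exact h
    have := Real.abs_exp_sub_one_sub_id_le h1
    rw [neg_sq] at this
    have h2 : Real.exp (-x) - 1 - (-x) ≤ x ^ 2 := le_trans (le_abs_self _) this
    linarith
  · have := g_le_lin hx
    nlinarith

lemma g_mono : MonotoneOn (fun x : ℝ => Real.exp (-x) - 1 + x) (Set.Ici 0) := by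
  have hd : ∀ x : ℝ, HasDerivAt (fun x : ℝ => Real.exp (-x) - 1 + x) (1 - Real.exp (-x)) x := by
    intro x
    have h1 : HasDerivAt (fun x : ℝ => Real.exp (-x)) (-Real.exp (-x)) x := by
      simpa [Function.comp_def] using (Real.hasDerivAt_exp (-x)).comp x (hasDerivAt_neg x)
    have h2 := (h1.sub_const 1).add (hasDerivAt_id x)
    have h3 : -Real.exp (-x) + 1 = 1 - Real.exp (-x) := by ring
    rw [h3] at h2
    exact h2
  apply monotoneOn_of_deriv_nonneg (convex_Ici 0)
  · exact (Continuous.continuousOn (by continuity))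
  · intro x hx
    exact (hd x).differentiableAt.differentiableWithinAt
  · intro x hx
    rw [(hd x).deriv]
    simp only [Set.mem_Ioi, interior_Ici] at hx
    have : Real.exp (-x) ≤ 1 := Real.exp_le_one_iff.2 (by linarith)
    linarith

-- bound for l > 0, r > 0
lemma g_bound {l r : ℝ} (hl : 0 < l) (hr : 0 < r) :
    Real.exp (-(l * r)) - 1 + l * r ≤ max l (l ^ 2) * min r (r ^ 2) := by
  have hlr : 0 ≤ l * r := by positivity
  rcases le_or_gt r 1 with h | h
  · have h1 : min r (r ^ 2) = r ^ 2 := min_eq_right (by nlinarith)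
    rw [h1]
    have := g_le_sq hlr
    have h2 : (l * r) ^ 2 ≤ max l (l ^ 2) * r ^ 2 := by
      have : l ^ 2 ≤ max l (l ^ 2) := le_max_right _ _
      nlinarith
    linarith
  · have h1 : min r (r ^ 2) = r := min_eq_left (by nlinarith)
    rw [h1]
    have := g_le_lin hlr
    have h2 : l * r ≤ max l (l ^ 2) * r := by
      have : l ≤ max l (l ^ 2) := le_max_left _ _
      nlinarith
    linarith

lemma g_bound_div {l r : ℝ} (hl : 0 < l) (hl1 : l ≤ 1) (hr : 0 < r) :
    (Real.exp (-(l * r)) - 1 + l * r) / l ≤ min r (r ^ 2) := by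
  have hlr : 0 ≤ l * r := by positivity
  rw [div_le_iff₀ hl]
  rcases le_or_gt r 1 with h | h
  · have h1 : min r (r ^ 2) = r ^ 2 := min_eq_right (by nlinarith)
    rw [h1]
    have := g_le_sq hlr
    nlinarith
  · have h1 : min r (r ^ 2) = r := min_eq_left (by nlinarith)
    rw [h1]
    have := g_le_lin hlr
    nlinarith

-- integral of inverse over Ioc
lemma integral_inv_Ioc {c s t : ℝ} (hc : 0 < c) (hs : 0 < s) (hst : s ≤ t) :
    ∫ l in Set.Ioc s t, (c * l)⁻¹ = c⁻¹ * (Real.log t - Real.log s) := by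
  have h0 : (0:ℝ) ∉ Set.uIcc s t := by
    rw [Set.uIcc_of_le hst]
    intro h; exact absurd h.1 (by linarith)
  have h1 : ∫ l in Set.Ioc s t, (c * l)⁻¹ = ∫ l in s..t, (c * l)⁻¹ :=
    (intervalIntegral.integral_of_le hst).symm
  rw [h1]
  have h2 : ∀ l : ℝ, (c * l)⁻¹ = c⁻¹ * l⁻¹ := fun l => by rw [mul_inv]
  simp_rw [h2]
  rw [intervalIntegral.integral_const_mul, integral_inv h0,
    Real.log_div (by linarith : t ≠ 0) (by linarith : s ≠ 0)]

lemma integrableOn_inv_Ioc {c s t : ℝ} (hc : 0 < c) (hs : 0 < s) (hst : s ≤ t) :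
    IntegrableOn (fun l => (c * l)⁻¹) (Set.Ioc s t) volume := by
  have h0 : ∀ x : ℝ, x ∈ Set.uIcc s t → c * x ≠ 0 := by
    intro x hx
    rw [Set.uIcc_of_le hst] at hx
    have : 0 < x := lt_of_lt_of_le hs hx.1
    positivity
  have h1 := (intervalIntegral.intervalIntegrable_inv (μ := volume) h0 (by fun_prop)).def'
  rwa [Set.uIoc_of_le hst] at h1

/-- Infinite-variation case. Assume `β > 0` or `Λ ≠ 0`,
and `∫_{[1,∞)} dλ/ψ(λ) < ∞`. Let `v : (0,∞) → (0,∞)` be the inverse of the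
strictly decreasing bijection `φ(t) = ∫_t^∞ dλ/ψ(λ)` of `(0,∞)` onto
itself. Then for every `u ≥ 0`, `v(a − u)/v(a) → e^{αu}` as `a → ∞`. -/
theorem v_ratio_tendsto_exp
    (Λ : Measure ℝ) (hsupp : Λ (Set.Iic 0) = 0)
    (hΛ : ∫⁻ r in Set.Ioi 0, ENNReal.ofReal (min r (r ^ 2)) ∂Λ < ⊤)
    (α β : ℝ) (hα : 0 ≤ α) (hβ : 0 ≤ β)
    (ψ : ℝ → ℝ)
    (hψ : ∀ l : ℝ, ψ l = α * l + β * l ^ 2 +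
      ∫ r in Set.Ioi 0, (Real.exp (-(l * r)) - 1 + l * r) ∂Λ)
    (hpos : 0 < β ∨ Λ (Set.Ioi 0) ≠ 0)
    (hint : IntegrableOn (fun l => (ψ l)⁻¹) (Set.Ici 1) volume)
    (φ : ℝ → ℝ)
    (hφ : ∀ t : ℝ, φ t = ∫ l in Set.Ioi t, (ψ l)⁻¹ ∂volume)
    (v : ℝ → ℝ)
    (hv : ∀ a : ℝ, 0 < a → 0 < v a ∧ φ (v a) = a) :
    ∀ u : ℝ, 0 ≤ u →
      Filter.Tendsto (fun a => v (a - u) / v a) Filter.atTop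
        (nhds (Real.exp (α * u))) := by
  -- notation
  set g : ℝ → ℝ → ℝ := fun l r => Real.exp (-(l * r)) - 1 + l * r with hgdef
  set I : ℝ → ℝ := fun l => ∫ r in Set.Ioi 0, g l r ∂Λ with hIdef
  have hψI : ∀ l, ψ l = α * l + β * l ^ 2 + I l := hψ
  -- integrability of the dominating bound
  have hbound_int : IntegrableOn (fun r => min r (r ^ 2)) (Set.Ioi 0) Λ := by
    refine ⟨(by fun_prop : Measurable fun r : ℝ => min r (r ^ 2)).aestronglyMeasurable, ?_⟩
    rw [hasFiniteIntegral_iff_ofReal ?_]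
    · exact hΛ
    · filter_upwards [self_mem_ae_restrict measurableSet_Ioi] with r hr
      have hr' : (0:ℝ) < r := hr
      positivity
  -- integrability of g l
  have hg_int : ∀ l : ℝ, 0 ≤ l → IntegrableOn (g l) (Set.Ioi 0) Λ := by
    intro l hl
    rcases eq_or_lt_of_le hl with rfl | hl
    · have : g 0 = fun _ : ℝ => (0:ℝ) := by funext r; simp [hgdef]
      rw [this]
      exact (integrableOn_const_iff (by simp)).2 (Or.inl (by simp))
    · refine (hbound_int.const_mul (max l (l ^ 2))).mono' ?_ ?_
      · exact (by fun_prop : Continuous (g l)).aestronglyMeasurable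
      · filter_upwards [self_mem_ae_restrict measurableSet_Ioi] with r hr
        rw [Real.norm_eq_abs, abs_of_nonneg (g_nonneg _)]
        exact g_bound hl hr
  have hI_nonneg : ∀ l : ℝ, 0 ≤ I l := fun l =>
    setIntegral_nonneg measurableSet_Ioi fun r _ => g_nonneg _
  have hI_mono : ∀ a b : ℝ, 0 ≤ a → a ≤ b → I a ≤ I b := by
    intro a b ha hab
    refine setIntegral_mono_on (hg_int a ha) (hg_int b (ha.trans hab)) measurableSet_Ioi ?_
    intro r hr
    have hr' : (0:ℝ) < r := hr
    exact g_mono (Set.mem_Ici.2 (mul_nonneg ha hr'.le))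
      (Set.mem_Ici.2 (mul_nonneg (ha.trans hab) hr'.le))
      (mul_le_mul_of_nonneg_right hab hr'.le)
  have hψ_mono : ∀ a b : ℝ, 0 ≤ a → a ≤ b → ψ a ≤ ψ b := by
    intro a b ha hab
    rw [hψI a, hψI b]
    have h1 : α * a ≤ α * b := mul_le_mul_of_nonneg_left hab hα
    have h2 : β * a ^ 2 ≤ β * b ^ 2 :=
      mul_le_mul_of_nonneg_left (by nlinarith) hβ
    have h3 := hI_mono a b ha hab
    linarith
  have hψ_pos : ∀ l : ℝ, 0 < l → 0 < ψ l := by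
    intro l hl
    rw [hψI l]
    have h1 : 0 ≤ α * l := mul_nonneg hα hl.le
    rcases hpos with hβ' | hΛ'
    · have : 0 < β * l ^ 2 := by positivity
      have := hI_nonneg l
      linarith
    · have hIpos : 0 < I l := by
        rw [hIdef]
        rw [setIntegral_pos_iff_support_of_nonneg_ae (ae_of_all _ fun r => g_nonneg _)
          (hg_int l hl.le)]
        have hsub : Set.Ioi 0 ⊆ Function.support (g l) ∩ Set.Ioi 0 := by
          intro r hr
          refine ⟨?_, hr⟩
          have hr' : (0:ℝ) < r := hr
          have hx : -(l * r) ≠ 0 := by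
            have : 0 < l * r := by positivity
            intro h; rw [neg_eq_zero] at h; linarith
          have := Real.add_one_lt_exp hx
          simp only [Function.mem_support, hgdef]
          intro h
          nlinarith [Real.add_one_lt_exp (show l * r ≠ 0 by positivity)]
        exact lt_of_lt_of_le (pos_iff_ne_zero.2 hΛ') (measure_mono hsub)
      have : 0 ≤ β * l ^ 2 := by positivity
      linarith
  -- measurability of ψ⁻¹ on subsets of (0, ∞)
  have hΨmono : Monotone fun l : ℝ => ψ (max l 0) := fun a b hab =>
    hψ_mono _ _ (le_max_right _ _) (max_le_max hab le_rfl)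
  have hinv_meas : ∀ s : Set ℝ, s ⊆ Set.Ioi 0 → MeasurableSet s →
      AEStronglyMeasurable (fun l => (ψ l)⁻¹) (volume.restrict s) := by
    intro s hs hms
    refine (hΨmono.measurable.inv.aestronglyMeasurable).congr ?_
    filter_upwards [self_mem_ae_restrict hms] with l hl
    have : max l 0 = l := max_eq_left (le_of_lt (hs hl))
    simp [this]
  have hinv_int : ∀ t : ℝ, 0 < t → IntegrableOn (fun l => (ψ l)⁻¹) (Set.Ioi t) volume := by
    intro t ht
    rcases le_or_gt 1 t with h1 | h1
    · exact hint.mono_set fun x hx => le_trans h1 (le_of_lt hx)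
    · have hIoc : IntegrableOn (fun l => (ψ l)⁻¹) (Set.Ioc t 1) volume := by
        refine Integrable.mono' (g := fun _ => (ψ t)⁻¹)
          (integrableOn_const measure_Ioc_lt_top.ne)
          (hinv_meas _ (fun x hx => ht.trans hx.1) measurableSet_Ioc) ?_
        filter_upwards [self_mem_ae_restrict measurableSet_Ioc] with l hl
        rw [Real.norm_eq_abs, abs_of_nonneg (inv_nonneg.2 (hψ_pos l (ht.trans hl.1)).le)]
        exact inv_anti₀ (hψ_pos t ht) (hψ_mono t l ht.le hl.1.le)
      have heq : Set.Ioi t = Set.Ioc t 1 ∪ Set.Ioi 1 := (Set.Ioc_union_Ioi_eq_Ioi h1.le).symm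
      rw [IntegrableOn, heq]
      exact hIoc.union (hint.mono_set Set.Ioi_subset_Ici_self)
  -- φ decomposition
  have hφ_sub : ∀ s t : ℝ, 0 < s → s ≤ t →
      φ s = (∫ l in Set.Ioc s t, (ψ l)⁻¹ ∂volume) + φ t := by
    intro s t hs hst
    rw [hφ s, hφ t, ← Set.Ioc_union_Ioi_eq_Ioi hst,
      setIntegral_union Set.Ioc_disjoint_Ioi_same measurableSet_Ioi
        ((hinv_int s hs).mono_set Set.Ioc_subset_Ioi_self) (hinv_int t (hs.trans_le hst))]
  have hφ_anti : ∀ s t : ℝ, 0 < s → s ≤ t → φ t ≤ φ s := by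
    intro s t hs hst
    have h1 := hφ_sub s t hs hst
    have h2 : 0 ≤ ∫ l in Set.Ioc s t, (ψ l)⁻¹ ∂volume :=
      setIntegral_nonneg measurableSet_Ioc fun l hl =>
        inv_nonneg.2 (hψ_pos l (hs.trans hl.1)).le
    linarith
  have hφ_strict : ∀ s t : ℝ, 0 < s → s < t → φ t < φ s := by
    intro s t hs hst
    have h1 := hφ_sub s t hs hst.le
    have hconst : ∫ l in Set.Ioc s t, (fun _ : ℝ => (ψ t)⁻¹) l ∂volume
        ≤ ∫ l in Set.Ioc s t, (ψ l)⁻¹ ∂volume := by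
      refine setIntegral_mono_on (integrableOn_const measure_Ioc_lt_top.ne)
        ((hinv_int s hs).mono_set Set.Ioc_subset_Ioi_self) measurableSet_Ioc ?_
      intro l hl
      exact inv_anti₀ (hψ_pos l (hs.trans hl.1)) (hψ_mono l t (hs.trans hl.1).le hl.2)
    rw [setIntegral_const, Real.volume_real_Ioc_of_le hst.le, smul_eq_mul]
      at hconst
    have h3 : 0 < (t - s) * (ψ t)⁻¹ := by
      have := hψ_pos t (hs.trans hst)
      have : 0 < (ψ t)⁻¹ := by positivity
      nlinarith
    linarith
  -- v properties
  have hv_le : ∀ a b : ℝ, 0 < a → a ≤ b → v b ≤ v a := by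
    intro a b ha hab
    by_contra h
    push_neg at h
    have h2 := hφ_strict (v a) (v b) (hv a ha).1 h
    rw [(hv a ha).2, (hv b (ha.trans_le hab)).2] at h2
    linarith
  have hv_small : ∀ δ : ℝ, 0 < δ → ∀ a : ℝ, max 0 (φ δ) < a → v a < δ := by
    intro δ hδ a ha
    have ha0 : 0 < a := lt_of_le_of_lt (le_max_left _ _) ha
    by_contra h
    push_neg at h
    have h1 := hφ_anti δ (v a) hδ h
    rw [(hv a ha0).2] at h1
    have := lt_of_le_of_lt (le_max_right 0 (φ δ)) ha
    linarith
  -- the key limit I l / l → 0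
  have hI0 : Filter.Tendsto (fun l => I l / l) (nhdsWithin 0 (Set.Ioi 0)) (nhds 0) := by
    have hm : Set.Ioc (0:ℝ) 1 ∈ nhdsWithin (0:ℝ) (Set.Ioi 0) :=
      Ioc_mem_nhdsGT one_pos
    have h := tendsto_integral_filter_of_dominated_convergence
      (μ := Λ.restrict (Set.Ioi 0)) (l := nhdsWithin (0:ℝ) (Set.Ioi 0)) (F := fun l r => g l r / l) (f := fun _ => (0:ℝ))
      (bound := fun r => min r (r ^ 2))
      (Filter.Eventually.of_forall fun l =>
        (by fun_prop : Continuous fun r => g l r / l).aestronglyMeasurable)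
      ?_ hbound_int ?_
    · have hz : ∫ r in Set.Ioi 0, (0:ℝ) ∂Λ = 0 := integral_zero _ _
      rw [hz] at h
      refine h.congr fun l => ?_
      exact integral_div l (g l)
    · filter_upwards [hm] with l hl
      filter_upwards [self_mem_ae_restrict measurableSet_Ioi] with r hr
      rw [Real.norm_eq_abs, abs_of_nonneg (div_nonneg (g_nonneg _) hl.1.le)]
      exact g_bound_div hl.1 hl.2 hr
    · filter_upwards [self_mem_ae_restrict measurableSet_Ioi] with r hr
      have hr' : (0:ℝ) < r := hr
      apply squeeze_zero' (g := fun l => l * r ^ 2)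
      · filter_upwards [self_mem_nhdsWithin] with l hl
        exact div_nonneg (g_nonneg _) (le_of_lt hl)
      · filter_upwards [self_mem_nhdsWithin] with l hl
        have hl' : (0:ℝ) < l := hl
        rw [div_le_iff₀ hl']
        simp only [hgdef]
        have := g_le_sq (show 0 ≤ l * r by positivity)
        nlinarith
      · have : Filter.Tendsto (fun l : ℝ => l * r ^ 2) (nhds 0) (nhds 0) := by
          simpa [Pi.mul_def] using (continuous_id.mul continuous_const).tendsto (0:ℝ)
        exact this.mono_left nhdsWithin_le_nhds
  -- for every ε > 0 there is δ with ψ l ≤ (α + ε) l on (0, δ]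
  have hψ_small : ∀ ε : ℝ, 0 < ε → ∃ δ : ℝ, 0 < δ ∧ δ ≤ 1 ∧
      ∀ l : ℝ, 0 < l → l ≤ δ → ψ l ≤ (α + ε) * l := by
    intro ε hε
    have h1 : ∀ᶠ l in nhdsWithin (0:ℝ) (Set.Ioi 0), I l / l < ε / 2 :=
      hI0.eventually_lt_const (by positivity)
    have h2 : ∀ᶠ l in nhdsWithin (0:ℝ) (Set.Ioi 0), β * l < ε / 2 := by
      have hcont : Filter.Tendsto (fun l : ℝ => β * l) (nhds 0) (nhds 0) := by
        simpa [Pi.mul_def] using (continuous_const.mul continuous_id).tendsto (0:ℝ)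
      exact (hcont.mono_left nhdsWithin_le_nhds).eventually_lt_const (by positivity)
    have h3 : ∀ᶠ l in nhdsWithin (0:ℝ) (Set.Ioi 0), l ∈ Set.Ioc (0:ℝ) 1 :=
      Filter.eventually_of_mem (Ioc_mem_nhdsGT one_pos) fun x hx => hx
    obtain ⟨δ, hδ, hsub⟩ := mem_nhdsGT_iff_exists_Ioc_subset.1
      ((h1.and (h2.and h3)).filter_mono le_rfl)
    refine ⟨δ, hδ, (hsub (Set.mem_Ioc.2 ⟨hδ, le_rfl⟩)).2.2.2, ?_⟩
    intro l hl hlδ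
    obtain ⟨ha, hb, _⟩ := hsub (Set.mem_Ioc.2 ⟨hl, hlδ⟩)
    rw [hψI l]
    have hIl : I l < ε / 2 * l := by
      rw [div_lt_iff₀ hl] at ha; linarith
    nlinarith
  -- main argument
  intro u hu
  rcases eq_or_lt_of_le hu with rfl | hu
  · have heq : ∀ᶠ a in Filter.atTop, v (a - 0) / v a = 1 := by
      filter_upwards [Filter.eventually_gt_atTop (0:ℝ)] with a ha
      rw [sub_zero, div_self (ne_of_gt (hv a ha).1)]
    rw [show Real.exp (α * 0) = 1 by simp]
    exact Filter.Tendsto.congr' (heq.mono fun a h => h.symm) tendsto_const_nhds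
  · rw [Metric.tendsto_atTop]
    intro ε' hε'
    set c : ℝ := Real.log (1 + ε' * Real.exp (-(α * u))) with hcdef
    have hcpos : 0 < c := Real.log_pos (by nlinarith [Real.exp_pos (-(α * u))])
    set ε : ℝ := c / (2 * u) with hεdef
    have hεpos : 0 < ε := by positivity
    obtain ⟨δ, hδpos, hδ1, hδψ⟩ := hψ_small ε hεpos
    refine ⟨max 0 (φ δ) + u + 1, ?_⟩
    intro a ha
    have hau : max 0 (φ δ) < a - u := by
      have := le_max_left (0:ℝ) (φ δ); linarith
    have hau0 : 0 < a - u := lt_of_le_of_lt (le_max_left _ _) hau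
    have ha0 : 0 < a := by linarith
    set s := v a with hsdef
    set t := v (a - u) with htdef
    have hs : 0 < s := (hv a ha0).1
    have ht : 0 < t := (hv (a - u) hau0).1
    have hst : s ≤ t := hv_le (a - u) a hau0 (by linarith)
    have htδ : t < δ := hv_small δ hδpos (a - u) hau
    have hsδ : s < δ := lt_of_le_of_lt hst htδ
    -- key identity
    have hkey : ∫ l in Set.Ioc s t, (ψ l)⁻¹ ∂volume = u := by
      have h1 := hφ_sub s t hs hst
      rw [(hv a ha0).2, (hv (a - u) hau0).2] at h1
      linarith
    have hIoc_int : IntegrableOn (fun l => (ψ l)⁻¹) (Set.Ioc s t) volume :=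
      (hinv_int s hs).mono_set Set.Ioc_subset_Ioi_self
    -- lower bound: exp (α u) ≤ t / s
    have hlow : Real.exp (α * u) ≤ t / s := by
      rcases eq_or_lt_of_le hα with rfl | hα'
      · rw [zero_mul, Real.exp_zero]
        rw [le_div_iff₀ hs]
        linarith
      · have hmono : ∫ l in Set.Ioc s t, (ψ l)⁻¹ ∂volume
            ≤ ∫ l in Set.Ioc s t, (α * l)⁻¹ ∂volume := by
          refine setIntegral_mono_on hIoc_int (integrableOn_inv_Ioc hα' hs hst)
            measurableSet_Ioc ?_
          intro l hl
          have hl0 : 0 < l := hs.trans hl.1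
          refine inv_anti₀ (by positivity) ?_
          rw [hψI l]
          have := hI_nonneg l
          nlinarith
        rw [hkey, integral_inv_Ioc hα' hs hst] at hmono
        have hlog : α * u ≤ Real.log t - Real.log s := by
          have h := mul_le_mul_of_nonneg_left hmono hα'.le
          rw [← mul_assoc, mul_inv_cancel₀ (ne_of_gt hα'), one_mul] at h
          exact h
        have : α * u ≤ Real.log (t / s) := by
          rw [Real.log_div (ne_of_gt ht) (ne_of_gt hs)]; exact hlog
        calc Real.exp (α * u) ≤ Real.exp (Real.log (t / s)) := Real.exp_le_exp.2 this
          _ = t / s := Real.exp_log (by positivity)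
    -- upper bound: t / s ≤ exp ((α + ε) u)
    have hup : t / s ≤ Real.exp ((α + ε) * u) := by
      have hmono : ∫ l in Set.Ioc s t, ((α + ε) * l)⁻¹ ∂volume
          ≤ ∫ l in Set.Ioc s t, (ψ l)⁻¹ ∂volume := by
        refine setIntegral_mono_on (integrableOn_inv_Ioc (by linarith) hs hst) hIoc_int
          measurableSet_Ioc ?_
        intro l hl
        have hl0 : 0 < l := hs.trans hl.1
        exact inv_anti₀ (hψ_pos l hl0) (hδψ l hl0 (le_of_lt (lt_of_le_of_lt hl.2 htδ)))
      rw [hkey, integral_inv_Ioc (by linarith) hs hst] at hmono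
      have hlog : Real.log t - Real.log s ≤ (α + ε) * u := by
        have hαε : (0:ℝ) < α + ε := by linarith
        have h := mul_le_mul_of_nonneg_left hmono hαε.le
        rw [← mul_assoc, mul_inv_cancel₀ (ne_of_gt hαε), one_mul] at h
        exact h
      have h2 : Real.log (t / s) ≤ (α + ε) * u := by
        rw [Real.log_div (ne_of_gt ht) (ne_of_gt hs)]; exact hlog
      calc t / s = Real.exp (Real.log (t / s)) := (Real.exp_log (by positivity)).symm
        _ ≤ Real.exp ((α + ε) * u) := Real.exp_le_exp.2 h2
    -- conclude
    have hexpbound : Real.exp ((α + ε) * u) < Real.exp (α * u) + ε' := by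
      have h1 : (α + ε) * u = α * u + ε * u := by ring
      have h2 : ε * u = c / 2 := by rw [hεdef]; field_simp
      have h3 : Real.exp (ε * u) < Real.exp c := by
        rw [h2]; exact Real.exp_lt_exp.2 (by linarith)
      have h4 : Real.exp c = 1 + ε' * Real.exp (-(α * u)) := by
        rw [hcdef]; exact Real.exp_log (by nlinarith [Real.exp_pos (-(α * u))])
      have h5 : Real.exp ((α + ε) * u) = Real.exp (α * u) * Real.exp (ε * u) := by
        rw [h1, Real.exp_add]
      rw [h5]
      have h6 : Real.exp (α * u) * Real.exp (ε * u)
          < Real.exp (α * u) * (1 + ε' * Real.exp (-(α * u))) := by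
        exact mul_lt_mul_of_pos_left (h3.trans_eq h4) (Real.exp_pos _)
      have h7 : Real.exp (α * u) * (1 + ε' * Real.exp (-(α * u)))
          = Real.exp (α * u) + ε' := by
        rw [Real.exp_neg]
        field_simp
      linarith
    rw [Real.dist_eq, abs_of_nonneg (by linarith : (0:ℝ) ≤ t / s - Real.exp (α * u))]
    linarith
end
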